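/- If G is a finite simple graph of maximum degree at most Δ (Δ a positive integer), then the 1-degenerate (acyclic) chromatic index of G satisfies χ'_1(G) ≤ Δ². -/

import Mathlib

variable {V : Type*}

/-- A matching in `G`: a set of pairwise non-adjacent edges of `G`. -/
def IsMatching (G : SimpleGraph V) (M : Finset (Sym2 V)) : Prop :=
  (M : Set (Sym2 V)) ⊆ G.edgeSet ∧
    ∀ e ∈ M, ∀ f ∈ M, e ≠ f → ∀ v : V, v ∈ e → v ∉ f

/-- `V(M)`: the set of vertices incident with an edge of `M`. -/
def mVerts (M : Finset (Sym2 V)) : Set V := {v | ∃ e ∈ M, v ∈ e}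

/-- A `1`-degenerate (acyclic) matching: a matching `M` such that `G[V(M)]` is a forest. -/
def IsAcyclicMatching (G : SimpleGraph V) (M : Finset (Sym2 V)) : Prop :=
  IsMatching G M ∧ (G.induce (mVerts M)).IsAcyclic

/-- The `1`-degenerate (acyclic) chromatic index `χ'_1(G)`: the minimum number of parts
in a partition of the edge set of `G` into acyclic matchings. -/
noncomputable def acyclicChromIndex (G : SimpleGraph V) : ℕ :=
  sInf {n | ∃ P : Fin n → Finset (Sym2 V),
    (∀ i, IsAcyclicMatching G (P i)) ∧ ∀ e ∈ G.edgeSet, ∃! i, e ∈ P i}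


section AcyclicAux

open SimpleGraph Finset

variable {G : SimpleGraph V}

private lemma AM_support_getElem {x y : V} (p : G.Walk x y) (i : ℕ) (h : i < p.support.length) :
    p.support[i] = p.getVert i := by
  induction p generalizing i with
  | nil => simp at h; subst h; simp [Walk.getVert]
  | cons hadj q ih =>
    cases i with
    | zero => simp [Walk.getVert]
    | succ n =>
      simp only [Walk.support_cons] at h ⊢
      rw [List.getElem_cons_succ]
      exact ih n (by simpa using Nat.lt_of_succ_lt_succ h)

private lemma AM_two_nbrs {u : V} {c : G.Walk u u} (hc : c.IsCycle) :
    ∃ a b, a ≠ b ∧ G.Adj u a ∧ G.Adj u b ∧ a ∈ c.support.tail ∧ b ∈ c.support.tail := by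
  have h3 := hc.three_le_length
  have hlen : c.support.length = c.length + 1 := c.length_support
  have htl : c.support.tail.length = c.length := by
    rw [List.length_tail, hlen]; omega
  have e1 : c.support.tail[0]'(by omega) = c.getVert 1 := by
    rw [List.getElem_tail]; exact AM_support_getElem c 1 (by omega)
  have e2 : c.support.tail[c.length - 2]'(by omega) = c.getVert (c.length - 1) := by
    rw [List.getElem_tail, AM_support_getElem c _ (by omega)]
    exact congrArg c.getVert (by omega)
  refine ⟨c.getVert 1, c.getVert (c.length - 1), ?_, ?_, ?_, ?_, ?_⟩
  · intro hab
    have := (hc.support_nodup.getElem_inj_iff).mp (e1.trans (hab.trans e2.symm))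
    omega
  · have := c.adj_getVert_succ (by omega : 0 < c.length)
    simpa using this
  · have := c.adj_getVert_succ (by omega : c.length - 1 < c.length)
    rw [show c.length - 1 + 1 = c.length by omega, c.getVert_length] at this
    exact this.symm
  · rw [← e1]; exact List.getElem_mem _
  · rw [← e2]; exact List.getElem_mem _

/-- Lift a walk of `G` whose support lies in `S` to a walk of `G.induce S`. -/
private def AM_liftWalk {S : Set V} : ∀ {a b : V} (p : G.Walk a b)
    (hp : ∀ y ∈ p.support, y ∈ S),
    (G.induce S).Walk ⟨a, hp a p.start_mem_support⟩ ⟨b, hp b p.end_mem_support⟩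
  | _, _, Walk.nil, _ => Walk.nil
  | _, _, Walk.cons h q, hp =>
      Walk.cons (by exact h) (AM_liftWalk q fun y hy => hp y (by simp [hy]))

private lemma AM_liftWalk_support {S : Set V} {a b : V} (p : G.Walk a b)
    (hp : ∀ y ∈ p.support, y ∈ S) :
    (AM_liftWalk p hp).support.map Subtype.val = p.support := by
  induction p with
  | nil => simp [AM_liftWalk]
  | cons h q ih => simp only [AM_liftWalk, Walk.support_cons, List.map_cons, ih]; exact congrArg (List.cons _) (ih _)

private lemma AM_liftWalk_edges {S : Set V} {a b : V} (p : G.Walk a b)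
    (hp : ∀ y ∈ p.support, y ∈ S) :
    (AM_liftWalk p hp).edges.map (Sym2.map Subtype.val) = p.edges := by
  induction p with
  | nil => simp [AM_liftWalk]
  | cons h q ih => simp only [AM_liftWalk, Walk.edges_cons, List.map_cons, ih, Sym2.map_pair_eq]; exact congrArg (List.cons _) (ih _)

private lemma AM_liftWalk_isCycle {S : Set V} {a : V} (p : G.Walk a a)
    (hp : ∀ y ∈ p.support, y ∈ S) (h : p.IsCycle) : (AM_liftWalk p hp).IsCycle := by
  rw [Walk.isCycle_def] at h ⊢
  obtain ⟨ht, hne, hnd⟩ := h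
  refine ⟨?_, ?_, ?_⟩
  · rw [Walk.isTrail_def] at ht ⊢
    exact List.Nodup.of_map _ (by rw [AM_liftWalk_edges]; exact ht)
  · intro hnil
    have := AM_liftWalk_support p hp
    rw [hnil] at this
    simp only [Walk.support_nil, List.map_cons, List.map_nil] at this
    have hlen : p.support.length = 1 := by rw [← this]; rfl
    rw [p.length_support] at hlen
    have : p.length = 0 := by omega
    cases p with
    | nil => exact hne rfl
    | cons h q => simp at this
  · have : (AM_liftWalk p hp).support.tail.map Subtype.val = p.support.tail := by
      rw [← AM_liftWalk_support p hp, List.map_tail]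
    exact List.Nodup.of_map _ (by rw [this]; exact hnd)

private lemma AM_exists_cycle_of_not_acyclic {S : Set V} (h : ¬ (G.induce S).IsAcyclic) :
    ∃ (x : V) (c : G.Walk x x), c.IsCycle ∧ ∀ y ∈ c.support, y ∈ S := by
  unfold SimpleGraph.IsAcyclic at h
  push_neg at h
  obtain ⟨x, c, hc⟩ := h
  refine ⟨x.val, c.map (SimpleGraph.Embedding.induce S).toHom,
    hc.map Subtype.val_injective, ?_⟩
  intro y hy
  replace hy : y ∈ c.support.map (SimpleGraph.Embedding.induce (G := G) S).toHom := by
    rw [← Walk.support_map]; exact hy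
  obtain ⟨z, _, rfl⟩ := List.mem_map.mp hy
  exact z.2

private lemma AM_not_acyclic_of_cycle {S : Set V} (x : V) (c : G.Walk x x) (hc : c.IsCycle)
    (hs : ∀ y ∈ c.support, y ∈ S) : ¬ (G.induce S).IsAcyclic := by
  intro hac
  exact hac (AM_liftWalk c hs) (AM_liftWalk_isCycle c hs hc)

private lemma AM_mem_support_of_rotate [DecidableEq V] {x w : V} {c : G.Walk x x}
    (h : w ∈ c.support) {y : V} (hy : y ∈ (c.rotate _ h).support) : y ∈ c.support := by
  rw [Walk.support_eq_cons, List.mem_cons] at hy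
  rcases hy with rfl | hy
  · exact h
  · exact List.mem_of_mem_tail (((Walk.support_rotate c _ h).mem_iff).mp hy)

/-- Key witness lemma: if adding the two endpoints of an edge `uv` to an acyclically
induced set `S` creates a cycle, then we can find two distinct "witness tokens". -/
private lemma AM_witness [DecidableEq V] {S : Set V} {u v : V}
    (hS : (G.induce S).IsAcyclic) (huv : G.Adj u v)
    (hu : u ∉ S) (hv : v ∉ S) (hnac : ¬ (G.induce (S ∪ {u, v})).IsAcyclic) :
    (∃ a b, a ≠ b ∧ a ∈ S ∧ b ∈ S ∧ G.Adj u a ∧ G.Adj u b) ∨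
    (∃ a b, a ≠ b ∧ a ∈ S ∧ b ∈ S ∧ G.Adj v a ∧ G.Adj v b) ∨
    (∃ a b, a ∈ S ∧ b ∈ S ∧ G.Adj u a ∧ G.Adj v b) := by
  obtain ⟨x, c, hc, hsupp⟩ := AM_exists_cycle_of_not_acyclic hnac
  have hmemT : ∀ y ∈ c.support, y = u ∨ y = v ∨ y ∈ S := by
    intro y hy
    rcases hsupp y hy with h | h
    · right; right; exact h
    · rcases h with h | h
      · left; exact h
      · right; left; exact h
  by_cases hcu : u ∈ c.support
  · set d := c.rotate _ hcu with hd
    have hdc : d.IsCycle := hc.rotate hcu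
    obtain ⟨a, b, hab, hua, hub, hat, hbt⟩ := AM_two_nbrs hdc
    have haS : a = v ∨ a ∈ S := by
      rcases hmemT a (AM_mem_support_of_rotate hcu (List.mem_of_mem_tail hat)) with h | h | h
      · exact absurd h.symm hua.ne
      · left; exact h
      · right; exact h
    have hbS : b = v ∨ b ∈ S := by
      rcases hmemT b (AM_mem_support_of_rotate hcu (List.mem_of_mem_tail hbt)) with h | h | h
      · exact absurd h.symm hub.ne
      · left; exact h
      · right; exact h
    rcases haS with hav | haS
    · have hbS' : b ∈ S := by
        rcases hbS with hbv | h
        · exact absurd (hav.trans hbv.symm) hab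
        · exact h
      have hcv : v ∈ c.support :=
        hav ▸ AM_mem_support_of_rotate hcu (List.mem_of_mem_tail hat)
      set e := c.rotate _ hcv with he
      have hec : e.IsCycle := hc.rotate hcv
      obtain ⟨a', b', hab', hva', hvb', hat', hbt'⟩ := AM_two_nbrs hec
      have ha'S : a' = u ∨ a' ∈ S := by
        rcases hmemT a' (AM_mem_support_of_rotate hcv (List.mem_of_mem_tail hat')) with h | h | h
        · left; exact h
        · exact absurd h.symm hva'.ne
        · right; exact h
      have hb'S : b' = u ∨ b' ∈ S := by
        rcases hmemT b' (AM_mem_support_of_rotate hcv (List.mem_of_mem_tail hbt')) with h | h | h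
        · left; exact h
        · exact absurd h.symm hvb'.ne
        · right; exact h
      rcases ha'S with rfl | ha'S
      · rcases hb'S with rfl | hb'S
        · exact absurd rfl hab'
        · exact Or.inr (Or.inr ⟨b, b', hbS', hb'S, hub, hvb'⟩)
      · exact Or.inr (Or.inr ⟨b, a', hbS', ha'S, hub, hva'⟩)
    · rcases hbS with hbv | hbS
      · have hcv : v ∈ c.support :=
          hbv ▸ AM_mem_support_of_rotate hcu (List.mem_of_mem_tail hbt)
        set e := c.rotate _ hcv with he
        have hec : e.IsCycle := hc.rotate hcv
        obtain ⟨a', b', hab', hva', hvb', hat', hbt'⟩ := AM_two_nbrs hec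
        have ha'S : a' = u ∨ a' ∈ S := by
          rcases hmemT a' (AM_mem_support_of_rotate hcv (List.mem_of_mem_tail hat')) with h | h | h
          · left; exact h
          · exact absurd h.symm hva'.ne
          · right; exact h
        have hb'S : b' = u ∨ b' ∈ S := by
          rcases hmemT b' (AM_mem_support_of_rotate hcv (List.mem_of_mem_tail hbt')) with h | h | h
          · left; exact h
          · exact absurd h.symm hvb'.ne
          · right; exact h
        rcases ha'S with rfl | ha'S
        · rcases hb'S with rfl | hb'S
          · exact absurd rfl hab'
          · exact Or.inr (Or.inr ⟨a, b', haS, hb'S, hua, hvb'⟩)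
        · exact Or.inr (Or.inr ⟨a, a', haS, ha'S, hua, hva'⟩)
      · exact Or.inl ⟨a, b, hab, haS, hbS, hua, hub⟩
  · by_cases hcv : v ∈ c.support
    · set e := c.rotate _ hcv with he
      have hec : e.IsCycle := hc.rotate hcv
      obtain ⟨a', b', hab', hva', hvb', hat', hbt'⟩ := AM_two_nbrs hec
      have ha'S : a' ∈ S := by
        rcases hmemT a' (AM_mem_support_of_rotate hcv (List.mem_of_mem_tail hat')) with h | h | h
        · exact absurd (h ▸ AM_mem_support_of_rotate hcv (List.mem_of_mem_tail hat')) hcu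
        · exact absurd h.symm hva'.ne
        · exact h
      have hb'S : b' ∈ S := by
        rcases hmemT b' (AM_mem_support_of_rotate hcv (List.mem_of_mem_tail hbt')) with h | h | h
        · exact absurd (h ▸ AM_mem_support_of_rotate hcv (List.mem_of_mem_tail hbt')) hcu
        · exact absurd h.symm hvb'.ne
        · exact h
      exact Or.inr (Or.inl ⟨a', b', hab', ha'S, hb'S, hva', hvb'⟩)
    · exfalso
      refine AM_not_acyclic_of_cycle x c hc ?_ hS
      intro y hy
      rcases hmemT y hy with rfl | rfl | h
      · exact absurd hy hcu
      · exact absurd hy hcv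
      · exact h

private lemma AM_mVerts_insert [DecidableEq (Sym2 V)] {M : Finset (Sym2 V)} {u v : V} :
    mVerts (insert s(u,v) M) = mVerts M ∪ {u, v} := by
  ext w
  simp only [mVerts, Finset.mem_insert, Set.mem_setOf_eq, Set.mem_union, Set.mem_insert_iff,
    Set.mem_singleton_iff]
  constructor
  · rintro ⟨e, (rfl | he), hw⟩
    · right; simpa using hw
    · left; exact ⟨e, he, hw⟩
  · rintro (⟨e, he, hw⟩ | h)
    · exact ⟨e, Or.inr he, hw⟩
    · exact ⟨s(u,v), Or.inl rfl, by simpa using h⟩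

private lemma AM_extend [Fintype V] [DecidableEq V] [DecidableRel G.Adj] {Δ n : ℕ}
    (hΔ : 1 ≤ Δ) (hn : Δ * Δ ≤ n) (hdeg : ∀ w, G.degree w ≤ Δ)
    {E' : Finset (Sym2 V)} (hE' : ↑E' ⊆ G.edgeSet)
    {P : Fin n → Finset (Sym2 V)}
    (hPac : ∀ i, IsAcyclicMatching G (P i))
    (hPsub : ∀ i, P i ⊆ E')
    (huniq : ∀ (f : Sym2 V) (i j : Fin n), f ∈ P i → f ∈ P j → i = j)
    {u v : V} (huv : G.Adj u v) (he : s(u,v) ∉ E') :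
    ∃ i, IsAcyclicMatching G (insert s(u,v) (P i)) := by
  classical
  have hcls : ∀ f : Sym2 V, (univ.filter (fun i => f ∈ P i)).card ≤ 1 := by
    intro f
    refine Finset.card_le_one.mpr ?_
    intro i hi j hj
    simp only [mem_filter] at hi hj
    exact huniq f i j hi.2 hj.2
  have hAt : ∀ (w : V) (g : Sym2 V), g ∈ G.incidenceFinset w →
      ∀ I : Finset (Fin n), (∀ i ∈ I, ∃ f ∈ P i, w ∈ f ∧ f ≠ g) → I.card ≤ Δ - 1 := by
    intro w g hg I hI
    have hsub : I ⊆ (G.incidenceFinset w \ {g}).biUnion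
        (fun f => univ.filter (fun i => f ∈ P i)) := by
      intro i hi
      obtain ⟨f, hfP, hwf, hfg⟩ := hI i hi
      refine Finset.mem_biUnion.2 ⟨f, ?_, by simp [hfP]⟩
      rw [Finset.mem_sdiff, SimpleGraph.mem_incidenceFinset]
      exact ⟨⟨hE' (hPsub i hfP), hwf⟩, by simpa using hfg⟩
    calc I.card ≤ _ := Finset.card_le_card hsub
      _ ≤ ∑ f ∈ G.incidenceFinset w \ {g}, (univ.filter (fun i => f ∈ P i)).card :=
          Finset.card_biUnion_le
      _ ≤ ∑ _f ∈ G.incidenceFinset w \ {g}, 1 := Finset.sum_le_sum (fun f _ => hcls f)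
      _ = (G.incidenceFinset w \ {g}).card := by simp
      _ = G.degree w - 1 := by
          rw [Finset.card_sdiff_of_subset (by simpa using hg), Finset.card_singleton,
            SimpleGraph.card_incidenceFinset_eq_degree]
      _ ≤ Δ - 1 := Nat.sub_le_sub_right (hdeg w) 1
  set Bad := univ.filter (fun i : Fin n => ¬ IsAcyclicMatching G (insert s(u,v) (P i))) with hBad
  set Au := univ.filter (fun i : Fin n => u ∈ mVerts (P i)) with hAu
  set Av := univ.filter (fun i : Fin n => v ∈ mVerts (P i)) with hAv
  set B := univ.filter (fun i : Fin n => u ∉ mVerts (P i) ∧ v ∉ mVerts (P i) ∧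
      ¬ (G.induce (mVerts (P i) ∪ {u, v})).IsAcyclic) with hB
  have hsplit : Bad ⊆ Au ∪ Av ∪ B := by
    intro i hi
    rw [hBad, mem_filter] at hi
    obtain ⟨-, hbad⟩ := hi
    simp only [hAu, hAv, hB, Finset.mem_union, mem_filter, mem_univ, true_and]
    by_cases h1 : u ∈ mVerts (P i)
    · exact Or.inl (Or.inl h1)
    by_cases h2 : v ∈ mVerts (P i)
    · exact Or.inl (Or.inr h2)
    refine Or.inr ⟨h1, h2, ?_⟩
    intro hacyc
    apply hbad
    constructor
    · constructor
      · intro f hf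
        rcases Finset.mem_insert.mp (by exact_mod_cast hf) with rfl | hf'
        · exact huv
        · exact (hPac i).1.1 hf'
      · intro f hf g hg hfg w hwf hwg
        rcases Finset.mem_insert.mp hf with rfl | hf' <;>
          rcases Finset.mem_insert.mp hg with hg' | hg'
        · exact hfg hg'.symm
        · rcases Sym2.mem_iff.mp hwf with rfl | rfl
          · exact h1 ⟨g, hg', hwg⟩
          · exact h2 ⟨g, hg', hwg⟩
        · rcases Sym2.mem_iff.mp (hg' ▸ hwg) with rfl | rfl
          · exact h1 ⟨f, hf', hwf⟩
          · exact h2 ⟨f, hf', hwf⟩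
        · exact (hPac i).1.2 f hf' g hg' hfg w hwf hwg
    · rw [AM_mVerts_insert]
      exact hacyc
  have hginc : s(u,v) ∈ G.incidenceFinset u := by
    rw [SimpleGraph.mem_incidenceFinset]
    exact ⟨G.mem_edgeSet.mpr huv, by simp⟩
  have hginc' : s(u,v) ∈ G.incidenceFinset v := by
    rw [SimpleGraph.mem_incidenceFinset]
    exact ⟨G.mem_edgeSet.mpr huv, by simp⟩
  have hAuc : Au.card ≤ Δ - 1 := by
    refine hAt u s(u,v) hginc Au ?_
    intro i hi
    rw [hAu, mem_filter] at hi
    obtain ⟨f, hf, hwf⟩ := hi.2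
    exact ⟨f, hf, hwf, fun h => he (h ▸ hPsub i hf)⟩
  have hAvc : Av.card ≤ Δ - 1 := by
    refine hAt v s(u,v) hginc' Av ?_
    intro i hi
    rw [hAv, mem_filter] at hi
    obtain ⟨f, hf, hwf⟩ := hi.2
    exact ⟨f, hf, hwf, fun h => he (h ▸ hPsub i hf)⟩
  set W : Finset (Bool × V) := ((G.neighborFinset u).erase v).image (Prod.mk false) ∪
      ((G.neighborFinset v).erase u).image (Prod.mk true) with hW
  have hWcard : W.card ≤ (Δ - 1) + (Δ - 1) := by
    refine (Finset.card_union_le _ _).trans ?_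
    have h1 : (((G.neighborFinset u).erase v).image (Prod.mk false)).card ≤ Δ - 1 := by
      refine (Finset.card_image_le).trans ?_
      rw [Finset.card_erase_of_mem (by simpa using huv)]
      exact Nat.sub_le_sub_right (by simpa using hdeg u) 1
    have h2 : (((G.neighborFinset v).erase u).image (Prod.mk true)).card ≤ Δ - 1 := by
      refine (Finset.card_image_le).trans ?_
      rw [Finset.card_erase_of_mem (by simpa using huv.symm)]
      exact Nat.sub_le_sub_right (by simpa using hdeg v) 1
    omega
  have htok : ∀ i ∈ B, 2 ≤ (W.filter (fun t => t.2 ∈ mVerts (P i))).card := by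
    intro i hi
    rw [hB, mem_filter] at hi
    obtain ⟨-, hu', hv', hnac⟩ := hi
    have hwitness := AM_witness (hPac i).2 huv hu' hv' hnac
    have hmemW : ∀ (a : V), a ∈ mVerts (P i) → G.Adj u a → (false, a) ∈ W := by
      intro a ha hadj
      rw [hW, Finset.mem_union]
      left
      refine Finset.mem_image.mpr ⟨a, ?_, rfl⟩
      refine Finset.mem_erase.mpr ⟨fun h => hv' (h ▸ ha), by simpa using hadj⟩
    have hmemW' : ∀ (a : V), a ∈ mVerts (P i) → G.Adj v a → (true, a) ∈ W := by
      intro a ha hadj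
      rw [hW, Finset.mem_union]
      right
      refine Finset.mem_image.mpr ⟨a, ?_, rfl⟩
      refine Finset.mem_erase.mpr ⟨fun h => hu' (h ▸ ha), by simpa using hadj⟩
    rw [← Nat.lt_iff_add_one_le, Nat.lt_iff_add_one_le]
    have key : ∀ t1 t2 : Bool × V, t1 ∈ W.filter (fun t => t.2 ∈ mVerts (P i)) →
        t2 ∈ W.filter (fun t => t.2 ∈ mVerts (P i)) → t1 ≠ t2 →
        1 + 1 ≤ (W.filter (fun t => t.2 ∈ mVerts (P i))).card := by
      intro t1 t2 h1 h2 h12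
      exact Finset.one_lt_card.mpr ⟨t1, h1, t2, h2, h12⟩
    rcases hwitness with ⟨a, b, hab, haS, hbS, hua, hub⟩ | ⟨a, b, hab, haS, hbS, hva, hvb⟩ |
        ⟨a, b, haS, hbS, hua, hvb⟩
    · exact key (false, a) (false, b) (Finset.mem_filter.mpr ⟨hmemW a haS hua, haS⟩)
        (Finset.mem_filter.mpr ⟨hmemW b hbS hub, hbS⟩) (by simp [hab])
    · exact key (true, a) (true, b) (Finset.mem_filter.mpr ⟨hmemW' a haS hva, haS⟩)
        (Finset.mem_filter.mpr ⟨hmemW' b hbS hvb, hbS⟩) (by simp [hab])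
    · exact key (false, a) (true, b) (Finset.mem_filter.mpr ⟨hmemW a haS hua, haS⟩)
        (Finset.mem_filter.mpr ⟨hmemW' b hbS hvb, hbS⟩) (by simp)
  have hper : ∀ t ∈ W, (B.filter (fun i => t.2 ∈ mVerts (P i))).card ≤ Δ - 1 := by
    rintro ⟨bl, w⟩ ht
    rw [hW, Finset.mem_union] at ht
    cases bl
    · have hwu : w ∈ (G.neighborFinset u).erase v := by
        rcases ht with h | h
        · obtain ⟨a, ha, heq⟩ := Finset.mem_image.mp h
          rw [Prod.mk.injEq] at heq
          rwa [← heq.2]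
        · obtain ⟨a, ha, heq⟩ := Finset.mem_image.mp h
          rw [Prod.mk.injEq] at heq
          exact absurd heq.1 (by simp)
      have hadj : G.Adj w u := (SimpleGraph.mem_neighborFinset _ _ _ |>.mp
        (Finset.mem_of_mem_erase hwu)).symm
      have hginc2 : s(w,u) ∈ G.incidenceFinset w := by
        rw [SimpleGraph.mem_incidenceFinset]
        exact ⟨G.mem_edgeSet.mpr hadj, by simp⟩
      refine hAt w s(w,u) hginc2 _ ?_
      intro i hi
      rw [mem_filter] at hi
      obtain ⟨hiB, f, hf, hwf⟩ := hi
      rw [hB, mem_filter] at hiB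
      refine ⟨f, hf, hwf, ?_⟩
      intro hfe
      exact hiB.2.1 ⟨f, hf, by rw [hfe]; simp⟩
    · have hwv : w ∈ (G.neighborFinset v).erase u := by
        rcases ht with h | h
        · obtain ⟨a, ha, heq⟩ := Finset.mem_image.mp h
          rw [Prod.mk.injEq] at heq
          exact absurd heq.1 (by simp)
        · obtain ⟨a, ha, heq⟩ := Finset.mem_image.mp h
          rw [Prod.mk.injEq] at heq
          rwa [← heq.2]
      have hadj : G.Adj w v := (SimpleGraph.mem_neighborFinset _ _ _ |>.mp
        (Finset.mem_of_mem_erase hwv)).symm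
      have hginc2 : s(w,v) ∈ G.incidenceFinset w := by
        rw [SimpleGraph.mem_incidenceFinset]
        exact ⟨G.mem_edgeSet.mpr hadj, by simp⟩
      refine hAt w s(w,v) hginc2 _ ?_
      intro i hi
      rw [mem_filter] at hi
      obtain ⟨hiB, f, hf, hwf⟩ := hi
      rw [hB, mem_filter] at hiB
      refine ⟨f, hf, hwf, ?_⟩
      intro hfe
      exact hiB.2.2.1 ⟨f, hf, by rw [hfe]; simp⟩
  have hBc : B.card ≤ (Δ - 1) * (Δ - 1) := by
    have hdc : 2 * B.card ≤ W.card * (Δ - 1) := by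
      calc 2 * B.card = ∑ _i ∈ B, 2 := by rw [Finset.sum_const, smul_eq_mul, mul_comm]
        _ ≤ ∑ i ∈ B, (W.filter (fun t => t.2 ∈ mVerts (P i))).card := Finset.sum_le_sum htok
        _ = ∑ i ∈ B, ∑ t ∈ W, (if t.2 ∈ mVerts (P i) then 1 else 0) := by
            refine Finset.sum_congr rfl fun i _ => ?_
            rw [Finset.card_filter]
        _ = ∑ t ∈ W, ∑ i ∈ B, (if t.2 ∈ mVerts (P i) then 1 else 0) := Finset.sum_comm
        _ = ∑ t ∈ W, (B.filter (fun i => t.2 ∈ mVerts (P i))).card := by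
            refine Finset.sum_congr rfl fun t _ => ?_
            rw [Finset.card_filter]
        _ ≤ ∑ _t ∈ W, (Δ - 1) := Finset.sum_le_sum hper
        _ = W.card * (Δ - 1) := by rw [Finset.sum_const, smul_eq_mul]
    have h2 : 2 * B.card ≤ 2 * ((Δ - 1) * (Δ - 1)) := by
      refine hdc.trans ?_
      calc W.card * (Δ - 1) ≤ ((Δ - 1) + (Δ - 1)) * (Δ - 1) :=
            Nat.mul_le_mul_right _ hWcard
        _ = 2 * ((Δ - 1) * (Δ - 1)) := by ring
    omega
  have hBadc : Bad.card < n := by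
    have h1 : Bad.card ≤ Au.card + Av.card + B.card := by
      refine (Finset.card_le_card hsplit).trans ?_
      refine (Finset.card_union_le _ _).trans ?_
      exact Nat.add_le_add_right (Finset.card_union_le _ _) _
    obtain ⟨d, rfl⟩ : ∃ d, Δ = d + 1 := ⟨Δ - 1, by omega⟩
    have hd : (d + 1) - 1 = d := by omega
    rw [hd] at hAuc hAvc hBc
    have hsq : (d + 1) * (d + 1) = d * d + 2 * d + 1 := by ring
    omega
  have hex : ∃ i, i ∉ Bad := by
    by_contra hall
    push_neg at hall
    have : Bad = univ := Finset.eq_univ_iff_forall.mpr hall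
    rw [this, Finset.card_univ, Fintype.card_fin] at hBadc
    omega
  obtain ⟨i, hi⟩ := hex
  refine ⟨i, ?_⟩
  by_contra h
  exact hi (Finset.mem_filter.mpr ⟨Finset.mem_univ _, h⟩)

private lemma AM_exists_partition [Fintype V] [DecidableRel G.Adj] {Δ : ℕ} (hΔ : 1 ≤ Δ)
    (hdeg : ∀ w, G.degree w ≤ Δ) (E' : Finset (Sym2 V)) :
    ↑E' ⊆ G.edgeSet → ∃ P : Fin (Δ ^ 2) → Finset (Sym2 V),
      (∀ i, IsAcyclicMatching G (P i)) ∧ (∀ i, P i ⊆ E') ∧ ∀ e ∈ E', ∃! i, e ∈ P i := by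
  classical
  induction E' using Finset.induction_on with
  | empty =>
    intro _
    refine ⟨fun _ => ∅, fun i => ⟨⟨by simp, by simp⟩, ?_⟩, fun i => Finset.empty_subset _,
      by simp⟩
    intro x c hc
    obtain ⟨e, he, -⟩ := x.2
    exact absurd he (Finset.notMem_empty e)
  | @insert e E'' hnot ih =>
    intro hsub
    obtain ⟨P, h1, h2, h3⟩ := ih (fun x hx => hsub (by simp [hx]))
    have heE : e ∈ G.edgeSet := hsub (by simp)
    revert hnot heE
    induction e using Sym2.ind with
    | _ u v =>
      intro hnot heE
      have huv : G.Adj u v := G.mem_edgeSet.mp heE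
      have huniq : ∀ (f : Sym2 V) (i j : Fin (Δ ^ 2)), f ∈ P i → f ∈ P j → i = j := by
        intro f i j hfi hfj
        exact ((h3 f (h2 i hfi)).unique hfi hfj)
      have hn : Δ * Δ ≤ Δ ^ 2 := by rw [pow_two]
      obtain ⟨i, hi⟩ := AM_extend hΔ hn hdeg (fun x hx => hsub (by simp [hx])) h1 h2
        huniq huv hnot
      refine ⟨Function.update P i (insert s(u,v) (P i)), ?_, ?_, ?_⟩
      · intro j
        by_cases hj : j = i
        · subst hj; rw [Function.update_self]; exact hi
        · rw [Function.update_of_ne hj]; exact h1 j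
      · intro j
        by_cases hj : j = i
        · subst hj; rw [Function.update_self]
          exact Finset.insert_subset_insert _ (h2 j)
        · rw [Function.update_of_ne hj]
          exact (h2 j).trans (Finset.subset_insert _ _)
      · intro f hf
        rcases Finset.mem_insert.mp hf with rfl | hf'
        · refine ⟨i, ?_, ?_⟩
          · show s(u,v) ∈ Function.update P i (insert s(u,v) (P i)) i
            rw [Function.update_self]
            exact Finset.mem_insert_self _ _
          intro j hj
          have hj' : s(u,v) ∈ Function.update P i (insert s(u,v) (P i)) j := hj
          by_cases hji : j = i
          · exact hji
          · rw [Function.update_of_ne hji] at hj'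
            exact absurd (h2 j hj') hnot
        · obtain ⟨j0, hj0, hj0u⟩ := h3 f hf'
          refine ⟨j0, ?_, ?_⟩
          · show f ∈ Function.update P i (insert s(u,v) (P i)) j0
            by_cases hji : j0 = i
            · subst hji; rw [Function.update_self]
              exact Finset.mem_insert_of_mem hj0
            · rw [Function.update_of_ne hji]; exact hj0
          · intro j hj
            have hj' : f ∈ Function.update P i (insert s(u,v) (P i)) j := hj
            by_cases hji : j = i
            · subst hji
              rw [Function.update_self, Finset.mem_insert] at hj'
              rcases hj' with rfl | hj'
              · exact absurd hf' hnot
              · exact hj0u _ hj'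
            · rw [Function.update_of_ne hji] at hj'
              exact hj0u _ hj'

end AcyclicAux

/-- If `G` is a graph of maximum degree at most `Δ ≥ 1`, then `χ'_1(G) ≤ Δ²`. -/
theorem acyclicChromIndex_le_sq {V : Type*} [Fintype V] (G : SimpleGraph V)
    [DecidableRel G.Adj] (Δ : ℕ) (hΔ : 1 ≤ Δ) (hdeg : ∀ v, G.degree v ≤ Δ) :
    acyclicChromIndex G ≤ Δ ^ 2 := by
  classical
  obtain ⟨P, h1, h2, h3⟩ := AM_exists_partition (G := G) hΔ hdeg G.edgeFinset
    (by rw [SimpleGraph.coe_edgeFinset])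
  exact Nat.sInf_le ⟨P, h1, fun e he => h3 e (SimpleGraph.mem_edgeFinset.mpr he)⟩
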